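/- Let $A$ be a non-empty set and $1\le p<\infty$. The only contractive positive projection $P\colon\ell^p(A)\to\ell^p(A)$ with constant diagonal $0$ is $P=0$. -/

import Mathlib

open scoped ENNReal

set_option maxHeartbeats 2000000 in
/-- The only contractive positive projection on `ℓᵖ(A)`, `1 ≤ p < ∞`, with
constant diagonal `0` (all diagonal matrix entries `(P e_a)(a)` equal `0`)
is `P = 0`. -/
theorem stmt12 {A : Type*} [Nonempty A] [DecidableEq A]
    (p : ℝ≥0∞) [Fact (1 ≤ p)] (hp : p ≠ ∞)
    (P : lp (fun _ : A => ℝ) p →ₗ[ℝ] lp (fun _ : A => ℝ) p)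
    (hproj : ∀ x, P (P x) = P x)
    (hpos : ∀ x : lp (fun _ : A => ℝ) p, (∀ a, 0 ≤ x a) → ∀ a, 0 ≤ P x a)
    (hcontr : ∀ x, ‖P x‖ ≤ ‖x‖)
    (hdiag : ∀ a : A, P (lp.single p a (1 : ℝ)) a = 0) :
    P = 0 := by
  have hp1 : (1 : ℝ≥0∞) ≤ p := Fact.out
  have hp0 : p ≠ 0 := by
    intro h; rw [h] at hp1; exact absurd hp1 (by simp)
  have hpr : 0 < p.toReal := ENNReal.toReal_pos hp0 hp
  have hpr1 : 1 ≤ p.toReal := by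
    have := ENNReal.toReal_mono hp hp1
    simpa using this
  -- continuous version of `P`
  let Pc : lp (fun _ : A => ℝ) p →L[ℝ] lp (fun _ : A => ℝ) p :=
    LinearMap.mkContinuous P 1 (fun x => by simpa using hcontr x)
  have hPc : ∀ x, Pc x = P x := fun x => rfl
  have e_nonneg : ∀ (c b : A), (0 : ℝ) ≤ (lp.single p c (1 : ℝ) : lp (fun _ : A => ℝ) p) b := by
    intro c b
    rcases eq_or_ne b c with h | h
    · subst h; rw [lp.single_apply_self]; norm_num
    · rw [lp.single_apply_ne p c _ h]
  have norm_e : ∀ c : A, ‖(lp.single p c (1 : ℝ) : lp (fun _ : A => ℝ) p)‖ = 1 := by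
    intro c
    have := lp.norm_single (E := fun _ : A => ℝ) (pos_iff_ne_zero.mpr hp0) c (1 : ℝ)
    simpa using this
  have single_smul_one : ∀ (c : A) (r : ℝ),
      (lp.single p c r : lp (fun _ : A => ℝ) p) = r • lp.single p c (1 : ℝ) := by
    intro c r
    rw [← lp.single_smul, smul_eq_mul, mul_one]
  -- it suffices to kill all the singles
  suffices hz : ∀ a : A, P (lp.single p a (1 : ℝ)) = 0 by
    ext x
    have h1 : HasSum (fun c => Pc (lp.single p c (x c))) (Pc x) :=
      (lp.hasSum_single hp x).mapL Pc
    have h2 : ∀ c, Pc (lp.single p c (x c)) = 0 := by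
      intro c
      rw [single_smul_one c (x c), map_smul, hPc, hz c, smul_zero]
    simp only [h2] at h1
    have h3 : Pc x = 0 := h1.unique hasSum_zero
    rw [← hPc x, h3]
    rfl
  rcases eq_or_lt_of_le hpr1 with hone | hone
  · -- case p = 1
    have hnorm : ∀ x : lp (fun _ : A => ℝ) p, HasSum (fun b => ‖x b‖) ‖x‖ := by
      intro x
      have h := lp.hasSum_norm hpr x
      rw [← hone] at h
      simpa [Real.rpow_one] using h
    have hsummable : ∀ x : lp (fun _ : A => ℝ) p, Summable (fun b => x b) :=
      fun x => (hnorm x).summable.of_norm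
    -- the mass functional
    let Λlin : lp (fun _ : A => ℝ) p →ₗ[ℝ] ℝ :=
      { toFun := fun x => ∑' b, x b
        map_add' := fun x y => by
          simp only [lp.coeFn_add, Pi.add_apply]
          exact Summable.tsum_add (hsummable x) (hsummable y)
        map_smul' := fun c x => by
          simp only [lp.coeFn_smul, Pi.smul_apply, smul_eq_mul, RingHom.id_apply]
          exact tsum_mul_left }
    let Λ : lp (fun _ : A => ℝ) p →L[ℝ] ℝ :=
      LinearMap.mkContinuous Λlin 1 (fun x => by
        rw [one_mul]
        calc ‖Λlin x‖ = ‖∑' b, x b‖ := rfl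
          _ ≤ ∑' b, ‖x b‖ := norm_tsum_le_tsum_norm (hnorm x).summable
          _ = ‖x‖ := (hnorm x).tsum_eq)
    have hΛ : ∀ x : lp (fun _ : A => ℝ) p, (∀ b, 0 ≤ x b) → Λ x = ‖x‖ := by
      intro x hx
      calc Λ x = ∑' b, x b := rfl
        _ = ∑' b, ‖x b‖ := tsum_congr fun b => (Real.norm_of_nonneg (hx b)).symm
        _ = ‖x‖ := (hnorm x).tsum_eq
    -- coordinatewise expansion of `P`
    have hexp : ∀ ν : lp (fun _ : A => ℝ) p,
        HasSum (fun c => ν c • P (lp.single p c (1 : ℝ))) (P ν) := by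
      intro ν
      have h1 : HasSum (fun c => Pc (lp.single p c (ν c))) (Pc ν) :=
        (lp.hasSum_single hp ν).mapL Pc
      have h2 : ∀ c, Pc (lp.single p c (ν c)) = ν c • P (lp.single p c (1 : ℝ)) := by
        intro c
        rw [single_smul_one c (ν c), map_smul, hPc]
      simp only [h2] at h1
      exact h1
    have hσle : ∀ c, ‖P (lp.single p c (1 : ℝ))‖ ≤ 1 := fun c =>
      (hcontr (lp.single p c (1 : ℝ))).trans (norm_e c).le
    have hcoord1 : ∀ ν : lp (fun _ : A => ℝ) p, (∀ b, 0 ≤ ν b) → ‖ν‖ = 1 →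
        HasSum (fun d => ν d) 1 := by
      intro ν hνnn hν1
      have h := hnorm ν
      rw [hν1] at h
      have he : (fun d => ν d) = fun d => ‖ν d‖ :=
        funext fun d => (Real.norm_of_nonneg (hνnn d)).symm
      rw [he]; exact h
    -- mass lemma : columns met by a fixed unit vector are normalized
    have mass : ∀ ν : lp (fun _ : A => ℝ) p, (∀ b, 0 ≤ ν b) → P ν = ν → ‖ν‖ = 1 →
        ∀ c, ν c ≠ 0 → ‖P (lp.single p c (1 : ℝ))‖ = 1 := by
      intro ν hνnn hνfix hν1 c hc
      have h1 : HasSum (fun d => Λ (ν d • P (lp.single p d (1 : ℝ)))) (Λ (P ν)) :=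
        (hexp ν).mapL Λ
      have h2 : ∀ d, Λ (ν d • P (lp.single p d (1 : ℝ)))
          = ν d * ‖P (lp.single p d (1 : ℝ))‖ := by
        intro d
        rw [map_smul, smul_eq_mul, hΛ _ (hpos _ (e_nonneg d))]
      have hΛPν : Λ (P ν) = 1 := by rw [hνfix, hΛ ν hνnn, hν1]
      simp only [h2, hΛPν] at h1
      have h4 : HasSum (fun d => ν d) 1 := hcoord1 ν hνnn hν1
      by_contra hne
      have hlt : ‖P (lp.single p c (1 : ℝ))‖ < 1 := lt_of_le_of_ne (hσle c) hne
      have hcpos : 0 < ν c := lt_of_le_of_ne (hνnn c) (Ne.symm hc)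
      have : (1 : ℝ) < 1 := by
        refine hasSum_lt (f := fun d => ν d * ‖P (lp.single p d (1 : ℝ))‖)
          (g := fun d => ν d) (i := c) ?_ ?_ h1 h4
        · intro d
          exact mul_le_of_le_one_right (hνnn d) (hσle d)
        · simpa using mul_lt_of_lt_one_right hcpos hlt
      exact absurd this (lt_irrefl 1)
    -- coordinate expansion
    have hev : ∀ (ν : lp (fun _ : A => ℝ) p) (b : A),
        HasSum (fun c => ν c * (P (lp.single p c (1 : ℝ))) b) ((P ν) b) := by
      intro ν b
      let evb : lp (fun _ : A => ℝ) p →L[ℝ] ℝ :=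
        LinearMap.mkContinuous
          { toFun := fun x => x b
            map_add' := fun x y => by simp [lp.coeFn_add]
            map_smul' := fun c x => by simp [lp.coeFn_smul] }
          1 (fun x => by rw [one_mul]; exact lp.norm_apply_le_norm hp0 x b)
      have h1 := (hexp ν).mapL evb
      have h2 : ∀ c, evb (ν c • P (lp.single p c (1 : ℝ)))
          = ν c * (P (lp.single p c (1 : ℝ))) b := by
        intro c
        rw [map_smul, smul_eq_mul]
        rfl
      simp only [h2] at h1
      exact h1
    -- now the contradiction
    by_contra hcon
    push_neg at hcon
    obtain ⟨a, hy0⟩ := hcon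
    set U : Set ℝ := {r | ∃ ν : lp (fun _ : A => ℝ) p,
      (∀ b, 0 ≤ ν b) ∧ P ν = ν ∧ ‖ν‖ = 1 ∧ ∃ b, ν b = r} with hU
    have hbdd : BddAbove U := by
      refine ⟨1, ?_⟩
      rintro r ⟨ν, hνnn, _, hν1, b, rfl⟩
      calc ν b ≤ ‖ν b‖ := le_abs_self _
        _ ≤ ‖ν‖ := lp.norm_apply_le_norm hp0 ν b
        _ = 1 := hν1
    set y := P (lp.single p a (1 : ℝ)) with hy
    have hyn : ∀ b, 0 ≤ y b := hpos _ (e_nonneg a)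
    have hynorm : 0 < ‖y‖ := norm_pos_iff.mpr hy0
    set ν₀ : lp (fun _ : A => ℝ) p := ‖y‖⁻¹ • y with hν₀
    have hν₀nn : ∀ b, 0 ≤ ν₀ b := by
      intro b
      have : ν₀ b = ‖y‖⁻¹ * y b := by
        rw [hν₀]; simp [lp.coeFn_smul]
      rw [this]
      exact mul_nonneg (inv_nonneg.mpr (norm_nonneg _)) (hyn b)
    have hyfix : P y = y := hproj _
    have hν₀fix : P ν₀ = ν₀ := by rw [hν₀, map_smul, hyfix]
    have hν₀1 : ‖ν₀‖ = 1 := by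
      rw [hν₀, norm_smul, norm_inv, norm_norm, inv_mul_cancel₀ hynorm.ne']
    obtain ⟨b₀, hb₀⟩ : ∃ b, ν₀ b ≠ 0 := by
      by_contra hall
      push_neg at hall
      have hz0 : ν₀ = 0 := lp.ext (funext hall)
      rw [hz0] at hν₀1
      simp at hν₀1
    have hb₀pos : 0 < ν₀ b₀ := lt_of_le_of_ne (hν₀nn b₀) (Ne.symm hb₀)
    have hmemb : ν₀ b₀ ∈ U := ⟨ν₀, hν₀nn, hν₀fix, hν₀1, b₀, rfl⟩
    set m := sSup U with hm
    have hmpos : 0 < m := lt_of_lt_of_le hb₀pos (le_csSup hbdd hmemb)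
    have keyB : ∀ ν : lp (fun _ : A => ℝ) p, (∀ b, 0 ≤ ν b) → P ν = ν → ‖ν‖ = 1 →
        ∀ b, ν b ≤ m * (1 - ν b) := by
      intro ν hνnn hνfix hν1 b
      have h1 : HasSum (fun c => ν c * (P (lp.single p c (1 : ℝ))) b) (ν b) := by
        have h := hev ν b
        rwa [hνfix] at h
      have h4 : HasSum (fun d => ν d) 1 := hcoord1 ν hνnn hν1
      have h2 : HasSum (fun c => m * ν c - (if c = b then m * ν b else 0))
          (m * (1 - ν b)) := by
        have h5 : HasSum (fun c => m * ν c - (if c = b then m * ν b else 0))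
            (m * 1 - m * ν b) := (h4.mul_left m).sub (hasSum_ite_eq b (m * ν b))
        convert h5 using 1
        ring
      refine hasSum_le ?_ h1 h2
      intro c
      rcases eq_or_ne c b with hc | hc
      · subst hc
        simp [hdiag c]
      · rw [if_neg hc, sub_zero]
        rcases eq_or_lt_of_le (hνnn c) with hc0 | hc0
        · rw [← hc0]
          simp
        · have h6 : ‖P (lp.single p c (1 : ℝ))‖ = 1 := mass ν hνnn hνfix hν1 c hc0.ne'
          have hmem : (P (lp.single p c (1 : ℝ))) b ∈ U :=
            ⟨P (lp.single p c (1 : ℝ)), hpos _ (e_nonneg c), hproj _, h6, b, rfl⟩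
          have h7 : (P (lp.single p c (1 : ℝ))) b ≤ m := le_csSup hbdd hmem
          calc ν c * (P (lp.single p c (1 : ℝ))) b ≤ ν c * m :=
                mul_le_mul_of_nonneg_left h7 (hνnn c)
            _ = m * ν c := mul_comm _ _
    have hub : ∀ r ∈ U, r ≤ m / (1 + m) := by
      rintro r ⟨ν, hνnn, hνfix, hν1, b, rfl⟩
      have h := keyB ν hνnn hνfix hν1 b
      rw [le_div_iff₀ (by linarith)]
      nlinarith
    have hle : m ≤ m / (1 + m) := csSup_le ⟨_, hmemb⟩ hub
    rw [le_div_iff₀ (by linarith)] at hle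
    nlinarith
  · -- case p > 1
    intro a
    by_contra hy0
    set y := P (lp.single p a (1 : ℝ)) with hy
    have hyn : ∀ b, 0 ≤ y b := hpos _ (e_nonneg a)
    have hya : y a = 0 := hdiag a
    have hyfix : P y = y := hproj _
    have hynorm : 0 < ‖y‖ := norm_pos_iff.mpr hy0
    set pr := p.toReal with hprdef
    set c := ‖y‖ ^ pr with hc
    have hcpos : 0 < c := Real.rpow_pos_of_pos hynorm pr
    have key : ∀ t : ℝ, 0 ≤ t → (1 + t) ^ pr * c ≤ 1 + t ^ pr * c := by
      intro t ht
      set x : lp (fun _ : A => ℝ) p := lp.single p a (1 : ℝ) + t • y with hxdef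
      have hxc : ∀ b, x b = (lp.single p a (1 : ℝ) : lp (fun _ : A => ℝ) p) b + t * y b := by
        intro b
        rw [hxdef]
        simp [lp.coeFn_add, lp.coeFn_smul]
        rfl
      have hnx : HasSum (fun b => ‖x b‖ ^ pr) (‖x‖ ^ pr) := lp.hasSum_norm hpr x
      have hny : HasSum (fun b => ‖y b‖ ^ pr) (‖y‖ ^ pr) := lp.hasSum_norm hpr y
      have hsum2 : HasSum (fun b => t ^ pr * ‖y b‖ ^ pr + (if b = a then (1 : ℝ) else 0))
          (t ^ pr * ‖y‖ ^ pr + 1) := (hny.mul_left _).add (hasSum_ite_eq a 1)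
      have hcongr : ∀ b, t ^ pr * ‖y b‖ ^ pr + (if b = a then (1 : ℝ) else 0)
          = ‖x b‖ ^ pr := by
        intro b
        rcases eq_or_ne b a with hb | hb
        · subst hb
          rw [if_pos rfl, hxc, lp.single_apply_self, hya]
          simp [Real.zero_rpow (ne_of_gt hpr), Real.one_rpow]
        · rw [if_neg hb, hxc, lp.single_apply_ne p a _ hb, zero_add, add_zero]
          have habs : ‖t * (y : ∀ _ : A, ℝ) b‖ = t * ‖(y : ∀ _ : A, ℝ) b‖ := by
            rw [Real.norm_eq_abs, Real.norm_eq_abs, abs_mul, abs_of_nonneg ht]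
          rw [habs, Real.mul_rpow ht (norm_nonneg _)]
      have hsum2' : HasSum (fun b => ‖x b‖ ^ pr) (t ^ pr * ‖y‖ ^ pr + 1) := by
        rw [← funext hcongr]
        exact hsum2
      have hxnorm : ‖x‖ ^ pr = t ^ pr * ‖y‖ ^ pr + 1 := hnx.unique hsum2'
      have hPx : P x = (1 + t) • y := by
        rw [hxdef, map_add, map_smul, ← hy, hyfix, add_smul, one_smul]
      have h3 : ‖P x‖ = (1 + t) * ‖y‖ := by
        rw [hPx, norm_smul, Real.norm_eq_abs, abs_of_nonneg (by linarith)]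
      have h4 : ((1 + t) * ‖y‖) ^ pr ≤ ‖x‖ ^ pr := by
        rw [← h3]
        exact Real.rpow_le_rpow (norm_nonneg _) (hcontr x) (le_of_lt hpr)
      rw [Real.mul_rpow (by linarith) (norm_nonneg _), hxnorm] at h4
      rw [hc]
      linarith
    have main : ∀ t : ℝ, 0 ≤ t → (1 + t) ^ (pr - 1) * c ≤ 1 := by
      intro t ht
      have h := key t ht
      have h1t : (0 : ℝ) < 1 + t := by linarith
      have e1 : (1 + t : ℝ) ^ pr = (1 + t) ^ (pr - 1) * (1 + t) := by
        have := Real.rpow_add_one h1t.ne' (pr - 1)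
        rw [show pr - 1 + 1 = pr by ring] at this
        exact this
      have e2 : t ^ pr ≤ t * (1 + t) ^ (pr - 1) := by
        rcases eq_or_lt_of_le ht with h0 | h0
        · rw [← h0, Real.zero_rpow (ne_of_gt hpr), zero_mul]
        · have : t ^ pr = t ^ (pr - 1) * t := by
            have := Real.rpow_add_one h0.ne' (pr - 1)
            rw [show pr - 1 + 1 = pr by ring] at this
            exact this
          rw [this]
          have h5 : t ^ (pr - 1) ≤ (1 + t) ^ (pr - 1) :=
            Real.rpow_le_rpow ht (by linarith) (by linarith)
          calc t ^ (pr - 1) * t ≤ (1 + t) ^ (pr - 1) * t :=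
                mul_le_mul_of_nonneg_right h5 ht
            _ = t * (1 + t) ^ (pr - 1) := mul_comm _ _
      rw [e1] at h
      nlinarith [mul_le_mul_of_nonneg_right e2 hcpos.le]
    set t : ℝ := (2 / c) ^ (pr - 1)⁻¹ with htdef
    have ht0 : 0 ≤ t := Real.rpow_nonneg (by positivity) _
    have hpr1' : pr - 1 ≠ 0 := ne_of_gt (by linarith)
    have h2c : t ^ (pr - 1) = 2 / c := Real.rpow_inv_rpow (by positivity) hpr1'
    have h5 : t ^ (pr - 1) ≤ (1 + t) ^ (pr - 1) :=
      Real.rpow_le_rpow ht0 (by linarith) (by linarith)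
    have h6 := main t ht0
    rw [h2c] at h5
    have h7 : (2 / c) * c ≤ 1 :=
      le_trans (mul_le_mul_of_nonneg_right h5 hcpos.le) h6
    rw [div_mul_cancel₀ _ hcpos.ne'] at h7
    linarith
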